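/- For all Σ, Λ ∈ SPD(n), there exists a unique L ∈ Sym(n) such that exp(L) = Σ^{−1/2} Λ Σ^{−1/2}; moreover, setting Log_Σ(Λ) := Σ^{1/2} L Σ^{1/2}, one has Log_Σ(Λ) ∈ Sym(n) and Exp_Σ(Log_Σ(Λ)) = Λ. That is, the affine-invariant logarithm is well defined on all of SPD(n) and is a right inverse of the affine-invariant exponential. -/

import Mathlib

open Matrix

section aux

variable {n : ℕ}

lemma isSelfAdjoint_iff_isSymm' {M : Matrix (Fin n) (Fin n) ℝ} :
    _root_.IsSelfAdjoint M ↔ M.IsSymm := by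
  rw [isSelfAdjoint_iff, Matrix.star_eq_conjTranspose, Matrix.IsSymm,
    Matrix.conjTranspose_eq_transpose_of_trivial]

lemma posDef_conj_aux {M B : Matrix (Fin n) (Fin n) ℝ} (hM : M.PosDef)
    (hB : IsUnit B) : (Bᴴ * M * B).PosDef := by
  exact hM.conjTranspose_mul_mul_same (Matrix.mulVec_injective_iff_isUnit.mpr hB)

end aux

/-- For `Σ, Λ ∈ SPD(n)` with `S` the positive-definite square root of `Σ`, there is a unique
symmetric `L` with `exp(L) = Σ^{−1/2} Λ Σ^{−1/2} = S⁻¹ Λ S⁻¹`; moreover for any such `L`,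
`Log_Σ(Λ) := Σ^{1/2} L Σ^{1/2} = S L S` is symmetric and `Exp_Σ(Log_Σ(Λ)) = Λ`:
the affine-invariant logarithm is well defined on all of `SPD(n)` and is a right inverse of
the affine-invariant exponential. -/
theorem spd_log_exists_unique_and_right_inverse (n : ℕ) (hn : 1 ≤ n)
    (Sg Lm S : Matrix (Fin n) (Fin n) ℝ)
    (hSg : Sg.PosDef) (hLm : Lm.PosDef) (hS : S.PosDef) (hSS : S * S = Sg) :
    (∃! L : Matrix (Fin n) (Fin n) ℝ,
        L.IsSymm ∧ NormedSpace.exp L = S⁻¹ * Lm * S⁻¹) ∧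
      ∀ L : Matrix (Fin n) (Fin n) ℝ,
        L.IsSymm → NormedSpace.exp L = S⁻¹ * Lm * S⁻¹ →
          (S * L * S).IsSymm ∧
            S * NormedSpace.exp (S⁻¹ * (S * L * S) * S⁻¹) * S = Lm := by
  letI : NormedRing (Matrix (Fin n) (Fin n) ℝ) := Matrix.instL2OpNormedRing
  letI : NormedAlgebra ℝ (Matrix (Fin n) (Fin n) ℝ) := Matrix.instL2OpNormedAlgebra
  have hSinv : S⁻¹.PosDef := hS.inv
  have hSinvH : S⁻¹ᴴ = S⁻¹ := hSinv.isHermitian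
  have hAposdef : (S⁻¹ * Lm * S⁻¹).PosDef := by
    have := posDef_conj_aux hLm hSinv.isUnit
    rwa [hSinvH] at this
  have hAsa : _root_.IsSelfAdjoint (S⁻¹ * Lm * S⁻¹) := by
    rw [isSelfAdjoint_iff, Matrix.star_eq_conjTranspose]
    exact hAposdef.isHermitian
  have hspec : ∀ x ∈ spectrum ℝ (S⁻¹ * Lm * S⁻¹), 0 < x := by
    intro x hx
    rw [Matrix.IsHermitian.spectrum_real_eq_range_eigenvalues hAposdef.isHermitian] at hx
    obtain ⟨i, rfl⟩ := hx
    exact hAposdef.eigenvalues_pos i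
  have hSdet : IsUnit S.det := hS.det_pos.ne'.isUnit
  have hinvS : S⁻¹ * S = 1 := Matrix.nonsing_inv_mul S hSdet
  have hSinv' : S * S⁻¹ = 1 := Matrix.mul_nonsing_inv S hSdet
  constructor
  · open scoped MatrixOrder in refine ⟨CFC.log (S⁻¹ * Lm * S⁻¹),
      ⟨isSelfAdjoint_iff_isSymm'.mp _root_.IsSelfAdjoint.log,
        CFC.exp_log _ hAposdef.isStrictlyPositive⟩, ?_⟩
    rintro L ⟨hLsymm, hLexp⟩
    have h := CFC.log_exp L (isSelfAdjoint_iff_isSymm'.mpr hLsymm)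
    rw [hLexp] at h
    exact h.symm
  · intro L hLsymm hLexp
    have hSsymm : Sᵀ = S := isSelfAdjoint_iff_isSymm'.mp
      (by rw [isSelfAdjoint_iff, Matrix.star_eq_conjTranspose]; exact hS.isHermitian)
    constructor
    · show (S * L * S)ᵀ = S * L * S
      rw [Matrix.transpose_mul, Matrix.transpose_mul, hSsymm, hLsymm.eq]
      noncomm_ring
    · have hmid : S⁻¹ * (S * L * S) * S⁻¹ = L := by
        have : S⁻¹ * (S * L * S) * S⁻¹ = (S⁻¹ * S) * L * (S * S⁻¹) := by noncomm_ring
        rw [this, hinvS, hSinv', Matrix.one_mul, Matrix.mul_one]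
      rw [hmid, hLexp]
      have : S * (S⁻¹ * Lm * S⁻¹) * S = (S * S⁻¹) * Lm * (S⁻¹ * S) := by noncomm_ring
      rw [this, hinvS, hSinv', Matrix.one_mul, Matrix.mul_one]
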